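/- Let X be a set and k : X × X → ℝ≥0 a function. The following are equivalent: (1) there exist a measure space (Ω,ν) and a map f : X → L¹(Ω,ν) such that k(x,y) = ‖f(x) − f(y)‖₁ for all x,y ∈ X; (2) for every p ≥ 1 there exist a measure space (Ω_p,ν_p) and a map f : X → L^p(Ω_p,ν_p) such that k(x,y)^{1/p} = ‖f(x) − f(y)‖_p for all x,y ∈ X; (3) k = d_μ for some measured walls structure (X, μ), i.e. there is a Borel measure μ on the power set 2^X such that for all x,y ∈ X the set {A ⊆ X : A cuts {x,y}} has finite measure equal to k(x,y). -/

import Mathlib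

/-!
Statement 10: For a set `X` and `k : X × X → ℝ≥0`, the following are equivalent:
(1) `k(x,y) = ‖f x - f y‖₁` for some map `f` into an `L¹`-space;
(2) for every `p ≥ 1`, `k(x,y)^{1/p} = ‖f x - f y‖_p` for some map `f` into an `L^p`-space;
(3) `k = d_μ` for some measured walls structure `μ` on `X`, i.e. a Borel measure on
`2^X` (identified with `X → Bool` with the product topology) with
`μ {A : A cuts {x,y}} = k(x,y)` for all `x, y`.
-/

section MeasuredWallsAuxSection

open MeasureTheory Set Filter Topology
open scoped ENNReal NNReal

noncomputable section

namespace MeasuredWallsAux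

/-- Bool-valued decide functions are measurable when the underlying set is. -/
lemma measurable_decide' {α : Type*} {m : MeasurableSpace α} {P : α → Prop} [DecidablePred P]
    (h : MeasurableSet {a | P a}) : Measurable fun a => decide (P a) := by
  classical
  intro S _
  have hset : (fun a => decide (P a)) ⁻¹' S =
      ((if true ∈ S then {a | P a} else ∅) ∪ (if false ∈ S then {a | P a}ᶜ else ∅)) := by
    ext a
    by_cases hPa : P a <;> by_cases hT : true ∈ S <;> by_cases hF : false ∈ S <;>
      simp [hPa, hT, hF]
  rw [hset]
  apply MeasurableSet.union <;> split_ifs <;>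
    first | exact h | exact h.compl | exact MeasurableSet.empty

/-- Disjoint closed sets in a compact, T2, totally disconnected space are separated by a clopen. -/
lemma exists_isClopen_separating {Z : Type*} [TopologicalSpace Z] [CompactSpace Z] [T2Space Z]
    [TotallyDisconnectedSpace Z] {K₁ K₂ : Set Z} (h₁ : IsClosed K₁) (h₂ : IsClosed K₂)
    (hd : Disjoint K₁ K₂) : ∃ E : Set Z, IsClopen E ∧ K₁ ⊆ E ∧ Disjoint E K₂ := by
  haveI : TotallySeparatedSpace Z := loc_compact_t2_tot_disc_iff_tot_sep.mp inferInstance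
  have step1 : ∀ a ∈ K₁, ∃ W : Set Z, IsClopen W ∧ a ∈ W ∧ Disjoint W K₂ := by
    intro a ha
    have hU : ∀ b : K₂, ∃ U : Set Z, IsClopen U ∧ a ∈ U ∧ (b : Z) ∈ Uᶜ := by
      intro b
      have hab : a ≠ (b : Z) := by
        intro h
        exact Set.disjoint_left.mp hd ha (h ▸ b.2)
      exact exists_isClopen_of_totally_separated hab
    choose U hUc haU hbU using hU
    have hcov : K₂ ⊆ ⋃ b : K₂, (U b)ᶜ := fun b hb =>
      Set.mem_iUnion.mpr ⟨⟨b, hb⟩, hbU ⟨b, hb⟩⟩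
    obtain ⟨t, ht⟩ := (h₂.isCompact).elim_finite_subcover (fun b : K₂ => (U b)ᶜ)
      (fun b => (hUc b).compl.isOpen) hcov
    refine ⟨⋂ b ∈ t, U b, ?_, ?_, ?_⟩
    · exact Set.Finite.isClopen_biInter t.finite_toSet (fun b _ => hUc b)
    · exact Set.mem_biInter fun b _ => haU b
    · rw [Set.disjoint_left]
      intro z hz hzK₂
      obtain ⟨b, hbt, hbz⟩ := Set.mem_iUnion₂.mp (ht hzK₂)
      exact hbz (Set.mem_iInter₂.mp hz b hbt)
  choose W hWc haW hWd using step1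
  have hcov : K₁ ⊆ ⋃ a : K₁, W a a.2 := fun a ha => Set.mem_iUnion.mpr ⟨⟨a, ha⟩, haW a ha⟩
  obtain ⟨s, hs⟩ := (h₁.isCompact).elim_finite_subcover (fun a : K₁ => W a a.2)
    (fun a => (hWc a a.2).isOpen) hcov
  refine ⟨⋃ a ∈ s, W a a.2, ?_, ?_, ?_⟩
  · exact Set.Finite.isClopen_biUnion s.finite_toSet (fun a _ => hWc a a.2)
  · intro z hz
    obtain ⟨a, hat, haz⟩ := Set.mem_iUnion₂.mp (hs hz)
    exact Set.mem_biUnion hat haz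
  · rw [Set.disjoint_left]
    intro z hz hzK₂
    obtain ⟨a, hat, haz⟩ := Set.mem_iUnion₂.mp hz
    exact Set.disjoint_left.mp (hWd a a.2) haz hzK₂

section Content

variable {Z : Type} [TopologicalSpace Z] [CompactSpace Z] [T2Space Z]
  [TotallyDisconnectedSpace Z]

variable (ρ : Set Z → ℝ≥0∞)

/-- inner "content" of an open set -/
def tauC (V : Set Z) : ℝ≥0∞ := ⨆ D : {D : Set Z // IsClopen D ∧ D ⊆ V}, ρ D.1

/-- outer measure candidate -/
def MOf (S : Set Z) : ℝ≥0∞ := ⨅ V : {V : Set Z // IsOpen V ∧ S ⊆ V}, tauC ρ V.1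

variable {ρ}

variable (hmono : ∀ {D D' : Set Z}, D ⊆ D' → ρ D ≤ ρ D')
  (hempty : ρ ∅ = 0)
  (hadd : ∀ D D' : Set Z, IsClopen D → IsClopen D' → Disjoint D D' →
    ρ (D ∪ D') = ρ D + ρ D')

instance tauC_nonempty (V : Set Z) : Nonempty {D : Set Z // IsClopen D ∧ D ⊆ V} :=
  ⟨⟨∅, isClopen_empty, Set.empty_subset V⟩⟩

lemma tauC_mono {V W : Set Z} (h : V ⊆ W) : tauC ρ V ≤ tauC ρ W :=
  iSup_le fun D => le_iSup_of_le ⟨D.1, D.2.1, D.2.2.trans h⟩ le_rfl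

lemma le_tauC {D V : Set Z} (h1 : IsClopen D) (h2 : D ⊆ V) : ρ D ≤ tauC ρ V :=
  le_iSup_of_le ⟨D, h1, h2⟩ le_rfl

include hmono in
lemma tauC_clopen {D : Set Z} (hD : IsClopen D) : tauC ρ D = ρ D :=
  le_antisymm (iSup_le fun E => hmono E.2.2) (le_tauC hD subset_rfl)

include hempty in
lemma tauC_empty : tauC ρ (∅ : Set Z) = 0 := by
  refine le_antisymm (iSup_le fun D => ?_) zero_le
  have hD : D.1 = ∅ := Set.subset_empty_iff.mp D.2.2
  rw [hD, hempty]

/-- splitting a clopen set across two opens -/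
lemma clopen_split {D V₁ V₂ : Set Z} (hD : IsClopen D) (h1 : IsOpen V₁) (h2 : IsOpen V₂)
    (hsub : D ⊆ V₁ ∪ V₂) :
    ∃ D₁ D₂ : Set Z, IsClopen D₁ ∧ IsClopen D₂ ∧ D₁ ⊆ V₁ ∧ D₂ ⊆ V₂ ∧ D = D₁ ∪ D₂ ∧
      Disjoint D₁ D₂ := by
  have hK₁ : IsClosed (D \ V₂) := by
    rw [Set.diff_eq]
    exact hD.isClosed.inter (isClosed_compl_iff.mpr h2)
  have hK₂ : IsClosed (D \ V₁) := by
    rw [Set.diff_eq]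
    exact hD.isClosed.inter (isClosed_compl_iff.mpr h1)
  have hdisj : Disjoint (D \ V₂) (D \ V₁) := by
    rw [Set.disjoint_left]
    rintro z ⟨hzD, hz2⟩ ⟨-, hz1⟩
    rcases hsub hzD with h | h
    · exact hz1 h
    · exact hz2 h
  obtain ⟨E, hE, hKE, hEd⟩ := exists_isClopen_separating hK₁ hK₂ hdisj
  refine ⟨D ∩ E, D \ E, hD.inter hE, hD.diff hE, ?_, ?_, ?_, ?_⟩
  · rintro z ⟨hzD, hzE⟩
    by_contra hz1
    exact Set.disjoint_left.mp hEd hzE ⟨hzD, hz1⟩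
  · rintro z ⟨hzD, hzE⟩
    by_contra hz2
    exact hzE (hKE ⟨hzD, hz2⟩)
  · rw [Set.inter_union_diff]
  · exact Set.disjoint_left.mpr fun z hz1 hz2 => hz2.2 hz1.2

include hmono hempty hadd in
lemma rho_le_sum_tauC (s : Finset ℕ) : ∀ (V : ℕ → Set Z), (∀ n, IsOpen (V n)) →
    ∀ D : Set Z, IsClopen D → D ⊆ (⋃ n ∈ s, V n) → ρ D ≤ ∑ n ∈ s, tauC ρ (V n) := by
  classical
  induction s using Finset.induction with
  | empty =>
    intro V hV D hD hsub
    simp only [Finset.notMem_empty, Set.iUnion_of_empty, Set.iUnion_empty] at hsub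
    have : D = ∅ := Set.subset_empty_iff.mp (by simpa using hsub)
    simp [this, hempty]
  | insert a s ha ih =>
    intro V hV D hD hsub
    have hsub' : D ⊆ V a ∪ ⋃ n ∈ s, V n := by
      intro z hz
      have := hsub hz
      simp only [Finset.mem_insert, Set.mem_iUnion, exists_prop] at this
      obtain ⟨n, (rfl | hn), hzn⟩ := this
      · exact Or.inl hzn
      · exact Or.inr (Set.mem_biUnion hn hzn)
    obtain ⟨D₁, D₂, h₁, h₂, hs₁, hs₂, hDeq, hdisj⟩ :=
      clopen_split hD (hV a) (isOpen_biUnion fun n _ => hV n) hsub'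
    rw [hDeq, hadd D₁ D₂ h₁ h₂ hdisj, Finset.sum_insert ha]
    exact add_le_add (le_tauC h₁ hs₁) (ih V hV D₂ h₂ hs₂)

include hmono hempty hadd in
lemma tauC_subadd (V : ℕ → Set Z) (hV : ∀ n, IsOpen (V n)) :
    tauC ρ (⋃ n, V n) ≤ ∑' n, tauC ρ (V n) := by
  refine iSup_le fun D => ?_
  obtain ⟨D, hD, hsub⟩ := D
  obtain ⟨s, hs⟩ := (hD.isClosed.isCompact).elim_finite_subcover V hV hsub
  exact (rho_le_sum_tauC hmono hempty hadd s V hV D hD hs).trans (ENNReal.sum_le_tsum s)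

lemma MOf_le_open {S V : Set Z} (h1 : IsOpen V) (h2 : S ⊆ V) : MOf ρ S ≤ tauC ρ V :=
  iInf_le_of_le ⟨V, h1, h2⟩ le_rfl

lemma le_MOf {S : Set Z} {c : ℝ≥0∞} (h : ∀ V : Set Z, IsOpen V → S ⊆ V → c ≤ tauC ρ V) :
    c ≤ MOf ρ S :=
  le_iInf fun V => h V.1 V.2.1 V.2.2

lemma MOf_mono {S T : Set Z} (hST : S ⊆ T) : MOf ρ S ≤ MOf ρ T :=
  le_MOf fun _V h1 h2 => MOf_le_open h1 (hST.trans h2)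

lemma MOf_open {V : Set Z} (hV : IsOpen V) : MOf ρ V = tauC ρ V :=
  le_antisymm (MOf_le_open hV subset_rfl) (le_MOf fun _W _h1 h2 => tauC_mono h2)

include hempty in
lemma MOf_empty : MOf ρ (∅ : Set Z) = 0 := by
  refine le_antisymm ?_ zero_le
  rw [MOf_open isOpen_empty, tauC_empty hempty]

include hmono hempty hadd in
lemma MOf_subadd (S : ℕ → Set Z) : MOf ρ (⋃ n, S n) ≤ ∑' n, MOf ρ (S n) := by
  refine ENNReal.le_of_forall_pos_le_add fun ε hε hfin => ?_
  obtain ⟨δ, hδpos, hδsum⟩ := ENNReal.exists_pos_sum_of_countable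
    (ε := (ε : ℝ≥0∞)) (by exact_mod_cast hε.ne') ℕ
  have hchoice : ∀ n, ∃ V : Set Z, IsOpen V ∧ S n ⊆ V ∧ tauC ρ V ≤ MOf ρ (S n) + δ n := by
    intro n
    have hfin' : MOf ρ (S n) ≠ ⊤ := ((ENNReal.le_tsum n).trans_lt hfin).ne
    have hlt : MOf ρ (S n) < MOf ρ (S n) + δ n :=
      ENNReal.lt_add_right hfin' (by exact_mod_cast (hδpos n).ne')
    obtain ⟨V, hVlt⟩ := iInf_lt_iff.mp (lt_of_le_of_lt le_rfl hlt : MOf ρ (S n) < _)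
    exact ⟨V.1, V.2.1, V.2.2, hVlt.le⟩
  choose V hVopen hSV hVle using hchoice
  have h1 : MOf ρ (⋃ n, S n) ≤ tauC ρ (⋃ n, V n) :=
    MOf_le_open (isOpen_iUnion hVopen) (Set.iUnion_mono hSV)
  refine h1.trans ((tauC_subadd hmono hempty hadd V hVopen).trans ?_)
  calc ∑' n, tauC ρ (V n) ≤ ∑' n, (MOf ρ (S n) + δ n) := ENNReal.tsum_le_tsum hVle
    _ = (∑' n, MOf ρ (S n)) + ∑' n, (δ n : ℝ≥0∞) := ENNReal.tsum_add
    _ ≤ (∑' n, MOf ρ (S n)) + ε := add_le_add le_rfl hδsum.le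

include hmono hempty hadd in
theorem exists_borel_measure_of_clopen_content :
    ∃ μ : @Measure Z (borel Z), ∀ D : Set Z, IsClopen D → μ D = ρ D := by
  classical
  letI : MeasurableSpace Z := borel Z
  haveI : BorelSpace Z := ⟨rfl⟩
  set mo : OuterMeasure Z :=
    { measureOf := MOf ρ
      empty := MOf_empty hempty
      mono := fun {s t} h => MOf_mono h
      iUnion_nat := fun s _ => MOf_subadd hmono hempty hadd s } with hmo
  have hmoapp : ∀ S : Set Z, mo S = MOf ρ S := fun S => rfl
  have hcar : ∀ U : Set Z, IsOpen U → MeasurableSet[mo.caratheodory] U := by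
    intro U hU
    rw [OuterMeasure.isCaratheodory_iff_le]
    intro T
    simp only [hmoapp]
    refine le_MOf fun V hV hTV => ?_
    have h1 : MOf ρ (T ∩ U) ≤ tauC ρ (V ∩ U) :=
      MOf_le_open (hV.inter hU) (Set.inter_subset_inter hTV subset_rfl)
    refine le_trans (add_le_add h1 le_rfl) ?_
    rw [tauC, ENNReal.iSup_add]
    refine iSup_le fun D₁' => ?_
    obtain ⟨D₁, hD₁, hD₁sub⟩ := D₁'
    have h2 : MOf ρ (T \ U) ≤ tauC ρ (V \ D₁) := by
      refine MOf_le_open (hV.sdiff hD₁.isClosed) ?_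
      intro z hz
      exact ⟨hTV hz.1, fun hzD => hz.2 (hD₁sub hzD).2⟩
    refine le_trans (add_le_add le_rfl h2) ?_
    rw [tauC, ENNReal.add_iSup]
    refine iSup_le fun D₂' => ?_
    obtain ⟨D₂, hD₂, hD₂sub⟩ := D₂'
    have hdisj : Disjoint D₁ D₂ := Set.disjoint_left.mpr fun a ha1 ha2 => (hD₂sub ha2).2 ha1
    rw [← hadd D₁ D₂ hD₁ hD₂ hdisj]
    exact le_tauC (hD₁.union hD₂)
      (Set.union_subset (hD₁sub.trans Set.inter_subset_left) (hD₂sub.trans Set.diff_subset))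
  have hle : (borel Z : MeasurableSpace Z) ≤ mo.caratheodory := by
    have hb : (borel Z : MeasurableSpace Z)
        = MeasurableSpace.generateFrom {s : Set Z | IsOpen s} := rfl
    rw [hb]
    exact MeasurableSpace.generateFrom_le fun U hU => hcar U hU
  refine ⟨mo.toMeasure hle, fun D hD => ?_⟩
  rw [toMeasure_apply mo hle hD.isOpen.measurableSet, hmoapp,
    MOf_open hD.isOpen, tauC_clopen hmono hD]

end Content

lemma isClopen_cut (X : Type) (x y : X) : IsClopen {A : X → Bool | A x ≠ A y} := by
  have hc : Continuous fun A : X → Bool => (A x, A y) :=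
    (continuous_apply x).prodMk (continuous_apply y)
  have hset : {A : X → Bool | A x ≠ A y}
      = (fun A : X → Bool => (A x, A y)) ⁻¹' {p : Bool × Bool | p.1 ≠ p.2} := rfl
  rw [hset]
  exact (isClopen_discrete _).preimage hc

lemma walls_to_Lp (X : Type) (k : X → X → NNReal)
    (μ : @Measure (X → Bool) (borel (X → Bool)))
    (hμ : ∀ x y : X, μ {A | A x ≠ A y} = (k x y : ENNReal))
    (P : ℝ≥0∞) (hP1 : 1 ≤ P) (hPt : P ≠ ⊤) :
    ∃ (Ω : Type) (_ : MeasurableSpace Ω) (ν : Measure Ω) (f : X → Lp ℝ P ν),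
      ∀ x y : X, (k x y : ℝ) ^ (1 / P.toReal) = ‖f x - f y‖ := by
  classical
  letI : MeasurableSpace (X → Bool) := borel (X → Bool)
  haveI : BorelSpace (X → Bool) := ⟨rfl⟩
  cases isEmpty_or_nonempty X with
  | inl h => exact ⟨X → Bool, borel _, μ, fun x => h.elim x, fun x => h.elim x⟩
  | inr h =>
    obtain ⟨x₀⟩ := h
    set g : X → (X → Bool) → ℝ :=
      fun x A => (if A x then (1:ℝ) else 0) - (if A x₀ then (1:ℝ) else 0) with hgdef
    have heval : ∀ x : X, Measurable fun A : X → Bool => A x :=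
      fun x => (continuous_apply x).measurable
    have hbr : Measurable fun b : Bool => (if b then (1:ℝ) else 0) := measurable_from_top
    have hgm : ∀ x, Measurable (g x) :=
      fun x => (hbr.comp (heval x)).sub (hbr.comp (heval x₀))
    have hcut : ∀ x y : X, MeasurableSet {A : X → Bool | A x ≠ A y} :=
      fun x y => (isClopen_cut X x y).isOpen.measurableSet
    have hP0 : P ≠ 0 := (zero_lt_one.trans_le hP1).ne'
    have hPtR : 0 < P.toReal := ENNReal.toReal_pos hP0 hPt
    have hpt : ∀ x y : X, ∀ A : X → Bool,
        ((‖g x A - g y A‖₊ : ℝ≥0∞)) ^ P.toReal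
          = Set.indicator {B : X → Bool | B x ≠ B y} (fun _ => (1:ℝ≥0∞)) A := by
      intro x y A
      have hsub : g x A - g y A = (if A x then (1:ℝ) else 0) - (if A y then (1:ℝ) else 0) := by
        simp only [hgdef]; ring
      by_cases hxy : A x = A y
      · rw [Set.indicator_of_notMem (by simpa using hxy), hsub, hxy]
        simp [ENNReal.zero_rpow_of_pos hPtR]
      · rw [Set.indicator_of_mem (by simpa using hxy), hsub]
        rcases Bool.eq_false_or_eq_true (A x) with hAx | hAx <;>
          rcases Bool.eq_false_or_eq_true (A y) with hAy | hAy <;>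
            rw [hAx, hAy] at hxy ⊢ <;> simp at hxy ⊢ <;>
              simp [ENNReal.one_rpow, nnnorm_neg]
    have hint : ∀ x y : X, ∫⁻ A, ((‖g x A - g y A‖₊ : ℝ≥0∞)) ^ P.toReal ∂μ
        = (k x y : ℝ≥0∞) := by
      intro x y
      rw [show (fun A => ((‖g x A - g y A‖₊ : ℝ≥0∞)) ^ P.toReal)
          = Set.indicator {B : X → Bool | B x ≠ B y} (fun _ => (1:ℝ≥0∞))
          from funext (hpt x y)]
      exact (lintegral_indicator_one (hcut x y)).trans (hμ x y)
    have hmem : ∀ x : X, MemLp (g x) P μ := by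
      intro x
      refine ⟨(hgm x).aestronglyMeasurable, ?_⟩
      rw [eLpNorm_eq_lintegral_rpow_enorm_toReal hP0 hPt]
      simp only [enorm_eq_nnnorm]
      have hgx0 : ∀ A, g x A - g x₀ A = g x A := by
        intro A; simp [hgdef]
      have := hint x x₀
      simp only [hgx0] at this
      rw [this]
      exact ENNReal.rpow_lt_top_of_nonneg (by positivity) ENNReal.coe_ne_top
    refine ⟨X → Bool, borel _, μ, fun x => (hmem x).toLp (g x), ?_⟩
    intro x y
    have h1 : ⇑((hmem x).toLp (g x) - (hmem y).toLp (g y)) =ᵐ[μ] g x - g y :=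
      (Lp.coeFn_sub _ _).trans (((hmem x).coeFn_toLp).sub ((hmem y).coeFn_toLp))
    rw [Lp.norm_def, eLpNorm_congr_ae h1, eLpNorm_eq_lintegral_rpow_enorm_toReal hP0 hPt]
    simp only [enorm_eq_nnnorm]
    have h2 : ∫⁻ A, ((‖(g x - g y) A‖₊ : ℝ≥0∞)) ^ P.toReal ∂μ = (k x y : ℝ≥0∞) := by
      simpa [Pi.sub_apply] using hint x y
    rw [h2, ← ENNReal.toReal_rpow, ENNReal.coe_toReal]

lemma xor_lt_Ico (a b : ℝ) :
    {t : ℝ | (t < a ∧ ¬ t < b) ∨ (t < b ∧ ¬ t < a)} = Set.Ico (min a b) (max a b) := by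
  rcases le_total a b with hab | hab
  · rw [min_eq_left hab, max_eq_right hab]
    ext t
    simp only [Set.mem_setOf_eq, Set.mem_Ico, not_lt]
    constructor
    · rintro (⟨h1, h2⟩ | ⟨h1, h2⟩)
      · constructor <;> linarith
      · exact ⟨h2, h1⟩
    · rintro ⟨h1, h2⟩
      exact Or.inr ⟨h2, h1⟩
  · rw [min_eq_right hab, max_eq_left hab]
    ext t
    simp only [Set.mem_setOf_eq, Set.mem_Ico, not_lt]
    constructor
    · rintro (⟨h1, h2⟩ | ⟨h1, h2⟩)
      · exact ⟨h2, h1⟩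
      · constructor <;> linarith
    · rintro ⟨h1, h2⟩
      exact Or.inl ⟨h2, h1⟩

lemma L1_to_walls (X : Type) (k : X → X → NNReal)
    (h : ∃ (Ω : Type) (_ : MeasurableSpace Ω) (ν : Measure Ω) (P : ℝ≥0∞) (_ : P = 1)
      (f : X → Lp ℝ P ν), ∀ x y : X, (k x y : ℝ) = ‖f x - f y‖) :
    ∃ μ : @Measure (X → Bool) (borel (X → Bool)),
      ∀ x y : X, μ {A | A x ≠ A y} = (k x y : ENNReal) := by
  classical
  obtain ⟨Ω, mΩ, ν, P, hP, f, hf⟩ := h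
  subst hP
  letI : MeasurableSpace (X → Bool) := borel (X → Bool)
  haveI : BorelSpace (X → Bool) := ⟨rfl⟩
  set g : X → Ω → ℝ := fun x => ⇑(f x) with hgdef
  have hgm : ∀ x, Measurable (g x) := fun x => (Lp.stronglyMeasurable (f x)).measurable
  set m : Measure (Ω × ℝ) := ν.prod volume with hm
  -- finite-stage maps into the power set
  set Ψ : Finset X → Ω × ℝ → X → Bool :=
    fun L q z => decide (z ∈ L ∧ q.2 < g z q.1) with hΨdef
  have hΨpre : ∀ (L : Finset X) (S : Set (X → Bool)), MeasurableSet (Ψ L ⁻¹' S) := by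
    intro L S
    set e : ({z // z ∈ L} → Bool) → (X → Bool) :=
      fun v z => if hz : z ∈ L then v ⟨z, hz⟩ else false with hedef
    set φ : Ω × ℝ → ({z // z ∈ L} → Bool) :=
      fun q z => decide (q.2 < g z.1 q.1) with hφdef
    have hfac : Ψ L = e ∘ φ := by
      funext q z
      by_cases hz : z ∈ L
      · simp [hΨdef, hedef, hφdef, hz]
      · simp [hΨdef, hedef, hφdef, hz]
    have hφm : Measurable φ := by
      refine measurable_pi_lambda _ fun z => ?_
      exact measurable_decide' (measurableSet_lt measurable_snd ((hgm z.1).comp measurable_fst))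
    have hmeasE : MeasurableSet (e ⁻¹' S) := by
      have hsing : ∀ v : {z // z ∈ L} → Bool, MeasurableSet {v} := by
        intro v
        have hv : {v} = ⋂ z : {z // z ∈ L}, (fun w : {z // z ∈ L} → Bool => w z) ⁻¹' {v z} := by
          ext w
          simp [funext_iff]
        rw [hv]
        exact MeasurableSet.iInter fun z =>
          (measurable_pi_apply z) (measurableSet_singleton (v z))
      have : e ⁻¹' S = ⋃ v ∈ (e ⁻¹' S), {v} := by ext v; simp
      rw [this]
      exact MeasurableSet.biUnion (Set.to_countable _) fun v _ => hsing v
    rw [hfac, Set.preimage_comp]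
    exact hφm hmeasE
  have hΨm : ∀ L, Measurable (Ψ L) := fun L S _ => hΨpre L S
  set μL : Finset X → Measure (X → Bool) := fun L => Measure.map (Ψ L) m with hμL
  have hcutms : ∀ x y : X, MeasurableSet {A : X → Bool | A x ≠ A y} :=
    fun x y => (isClopen_cut X x y).isOpen.measurableSet
  -- value of the finite-stage measures on cut sets
  have hcutval : ∀ (x y : X) (L : Finset X), x ∈ L → y ∈ L →
      μL L {A | A x ≠ A y} = (k x y : ℝ≥0∞) := by
    intro x y L hx hy
    have hA : MeasurableSet {q : Ω × ℝ | q.2 < g x q.1} :=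
      measurableSet_lt measurable_snd ((hgm x).comp measurable_fst)
    have hB : MeasurableSet {q : Ω × ℝ | q.2 < g y q.1} :=
      measurableSet_lt measurable_snd ((hgm y).comp measurable_fst)
    have hpre : Ψ L ⁻¹' {A | A x ≠ A y}
        = ({q : Ω × ℝ | q.2 < g x q.1} ∩ {q : Ω × ℝ | q.2 < g y q.1}ᶜ)
          ∪ ({q : Ω × ℝ | q.2 < g y q.1} ∩ {q : Ω × ℝ | q.2 < g x q.1}ᶜ) := by
      ext q
      simp only [Set.mem_preimage, Set.mem_setOf_eq, hΨdef, Set.mem_union, Set.mem_inter_iff,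
        Set.mem_compl_iff, ne_eq, decide_eq_decide, hx, hy, true_and]
      tauto
    have hSm : MeasurableSet (({q : Ω × ℝ | q.2 < g x q.1} ∩ {q : Ω × ℝ | q.2 < g y q.1}ᶜ)
        ∪ ({q : Ω × ℝ | q.2 < g y q.1} ∩ {q : Ω × ℝ | q.2 < g x q.1}ᶜ)) :=
      (hA.inter hB.compl).union (hB.inter hA.compl)
    rw [hμL, Measure.map_apply (hΨm L) (hcutms x y), hpre, hm, Measure.prod_apply hSm]
    have hfib : ∀ ω : Ω,
        (Prod.mk ω ⁻¹' (({q : Ω × ℝ | q.2 < g x q.1} ∩ {q : Ω × ℝ | q.2 < g y q.1}ᶜ)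
          ∪ ({q : Ω × ℝ | q.2 < g y q.1} ∩ {q : Ω × ℝ | q.2 < g x q.1}ᶜ)))
        = Set.Ico (min (g x ω) (g y ω)) (max (g x ω) (g y ω)) := by
      intro ω
      rw [← xor_lt_Ico (g x ω) (g y ω)]
      ext t
      simp only [Set.mem_preimage, Set.mem_union, Set.mem_inter_iff, Set.mem_compl_iff,
        Set.mem_setOf_eq]
    calc ∫⁻ ω, volume (Prod.mk ω ⁻¹' (({q : Ω × ℝ | q.2 < g x q.1}
            ∩ {q : Ω × ℝ | q.2 < g y q.1}ᶜ)
          ∪ ({q : Ω × ℝ | q.2 < g y q.1} ∩ {q : Ω × ℝ | q.2 < g x q.1}ᶜ))) ∂ν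
        = ∫⁻ ω, (‖g x ω - g y ω‖₊ : ℝ≥0∞) ∂ν := by
          refine lintegral_congr fun ω => ?_
          rw [hfib ω, Real.volume_Ico, max_sub_min_eq_abs, ← enorm_eq_nnnorm, Real.enorm_eq_ofReal_abs,
            abs_sub_comm]
      _ = eLpNorm (fun ω => g x ω - g y ω) 1 ν := by
          rw [eLpNorm_one_eq_lintegral_enorm]; simp only [enorm_eq_nnnorm]
      _ = eLpNorm (⇑(f x - f y)) 1 ν := by
          refine (eLpNorm_congr_ae ?_).symm
          filter_upwards [Lp.coeFn_sub (f x) (f y)] with ω hω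
          simp only [hω, Pi.sub_apply, hgdef]
      _ = (k x y : ℝ≥0∞) := by
          have hfin : eLpNorm (⇑(f x - f y)) 1 ν ≠ ⊤ := Lp.eLpNorm_ne_top (f x - f y)
          rw [show ((k x y : ℝ≥0∞)) = ENNReal.ofReal ((k x y : ℝ))
              from (ENNReal.ofReal_coe_nnreal).symm]
          rw [hf x y, Lp.norm_def, ENNReal.ofReal_toReal hfin]
  -- ultrafilter limit content
  set 𝒰 : Ultrafilter (Finset X) := Ultrafilter.of atTop with h𝒰
  have hlim : ∀ D : Set (X → Bool), ∃ c : ℝ≥0∞, Tendsto (fun L => μL L D) 𝒰 (𝓝 c) := by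
    intro D
    obtain ⟨c, -, hc⟩ := (isCompact_univ (X := ℝ≥0∞)).ultrafilter_le_nhds
      (𝒰.map fun L => μL L D) (by simp)
    exact ⟨c, hc⟩
  choose ρ hρ using hlim
  have ρ_mono : ∀ {D D' : Set (X → Bool)}, D ⊆ D' → ρ D ≤ ρ D' := by
    intro D D' hDD
    exact le_of_tendsto_of_tendsto' (hρ D) (hρ D') fun L => measure_mono hDD
  have ρ_empty : ρ ∅ = 0 := by
    refine tendsto_nhds_unique (hρ ∅) ?_
    simpa using (tendsto_const_nhds : Tendsto (fun _ : Finset X => (0:ℝ≥0∞)) 𝒰 (𝓝 0))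
  have ρ_add : ∀ D D' : Set (X → Bool), IsClopen D → IsClopen D' → Disjoint D D' →
      ρ (D ∪ D') = ρ D + ρ D' := by
    intro D D' hD hD' hdisj
    refine tendsto_nhds_unique (hρ (D ∪ D')) ?_
    have heq : (fun L => μL L (D ∪ D')) = fun L => μL L D + μL L D' :=
      funext fun L => measure_union hdisj hD'.isOpen.measurableSet
    rw [heq]
    exact (hρ D).add (hρ D')
  have ρ_cut : ∀ x y : X, ρ {A : X → Bool | A x ≠ A y} = (k x y : ℝ≥0∞) := by
    intro x y
    refine tendsto_nhds_unique (hρ _) ?_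
    have hev : ∀ᶠ L in (atTop : Filter (Finset X)),
        μL L {A : X → Bool | A x ≠ A y} = (k x y : ℝ≥0∞) := by
      filter_upwards [Filter.eventually_ge_atTop ({x, y} : Finset X)] with L hL
      have hsub : ({x, y} : Finset X) ⊆ L := hL
      exact hcutval x y L (hsub (Finset.mem_insert_self x {y}))
        (hsub (Finset.mem_insert_of_mem (Finset.mem_singleton_self y)))
    have hev' : ∀ᶠ L in (𝒰 : Filter (Finset X)),
        μL L {A : X → Bool | A x ≠ A y} = (k x y : ℝ≥0∞) :=
      hev.filter_mono (Ultrafilter.of_le _)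
    have hev'' : (fun L => μL L {A : X → Bool | A x ≠ A y})
        =ᶠ[(𝒰 : Filter (Finset X))] (fun _ => (k x y : ℝ≥0∞)) := hev'
    exact Tendsto.congr' hev''.symm tendsto_const_nhds
  obtain ⟨μ, hμ⟩ := exists_borel_measure_of_clopen_content
    (ρ := ρ) (fun {D D'} h => ρ_mono h) ρ_empty ρ_add
  exact ⟨μ, fun x y => (hμ _ (isClopen_cut X x y)).trans (ρ_cut x y)⟩

end MeasuredWallsAux

end

end MeasuredWallsAuxSection

open MeasureTheory

noncomputable section

theorem measured_walls_tfae (X : Type) (k : X → X → NNReal) :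
    ((∃ (Ω : Type) (_ : MeasurableSpace Ω) (ν : Measure Ω) (f : X → Lp ℝ 1 ν),
        ∀ x y : X, (k x y : ℝ) = ‖f x - f y‖) ↔
      (∃ μ : @Measure (X → Bool) (borel (X → Bool)),
        ∀ x y : X, μ {A | A x ≠ A y} = (k x y : ENNReal))) ∧
    ((∀ p : ℝ, 1 ≤ p →
        ∃ (Ω : Type) (_ : MeasurableSpace Ω) (ν : Measure Ω)
          (f : X → Lp ℝ (ENNReal.ofReal p) ν),
          ∀ x y : X, (k x y : ℝ) ^ (1 / p) = ‖f x - f y‖) ↔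
      (∃ μ : @Measure (X → Bool) (borel (X → Bool)),
        ∀ x y : X, μ {A | A x ≠ A y} = (k x y : ENNReal))) := by
  constructor
  · constructor
    · rintro ⟨Ω, mΩ, ν, f, hf⟩
      exact MeasuredWallsAux.L1_to_walls X k ⟨Ω, mΩ, ν, 1, rfl, f, hf⟩
    · rintro ⟨μ, hμ⟩
      obtain ⟨Ω, mΩ, ν, f, hf⟩ := MeasuredWallsAux.walls_to_Lp X k μ hμ 1 le_rfl ENNReal.one_ne_top
      refine ⟨Ω, mΩ, ν, f, fun x y => ?_⟩
      have := hf x y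
      rwa [ENNReal.toReal_one, div_one, Real.rpow_one] at this
  · constructor
    · intro h
      obtain ⟨Ω, mΩ, ν, f, hf⟩ := h 1 le_rfl
      refine MeasuredWallsAux.L1_to_walls X k ⟨Ω, mΩ, ν, ENNReal.ofReal 1, ENNReal.ofReal_one, f, fun x y => ?_⟩
      have := hf x y
      rwa [div_one, Real.rpow_one] at this
    · rintro ⟨μ, hμ⟩ p hp
      have hP1 : (1 : ENNReal) ≤ ENNReal.ofReal p := by
        rw [← ENNReal.ofReal_one]
        exact ENNReal.ofReal_le_ofReal hp
      obtain ⟨Ω, mΩ, ν, f, hf⟩ := MeasuredWallsAux.walls_to_Lp X k μ hμ (ENNReal.ofReal p) hP1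
        ENNReal.ofReal_ne_top
      refine ⟨Ω, mΩ, ν, f, fun x y => ?_⟩
      have := hf x y
      rwa [ENNReal.toReal_ofReal (le_trans zero_le_one hp)] at this


end
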